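/- Let Γ be a connected multigraph and l an edge joining two distinct vertices. For k ≥ 0 let B_k(Γ, l) be the graph obtained by subdividing l into a path of k+1 edges (introducing k new vertices). Then c(B_k(Γ, l)) = c(Γ) + k·c(Γ − l), where c denotes the number of spanning trees. -/

import Mathlib

/-- A multigraph: a set of edges, each with an unordered pair of endpoints. -/
structure Multigraph (V E : Type) where
  ends : E → Sym2 V

namespace Multigraph

variable {V E : Type}

/-- Adjacency via an edge lying in the subset `S`. -/
def Adj (G : Multigraph V E) (S : Set E) (x y : V) : Prop :=
  x ≠ y ∧ ∃ e ∈ S, G.ends e = s(x, y)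

/-- The subgraph with edge set `S` is connected (and spans `V`). -/
def ConnectedOn (G : Multigraph V E) (S : Set E) : Prop :=
  ∀ x y : V, Relation.ReflTransGen (G.Adj S) x y

def Connected (G : Multigraph V E) : Prop := G.ConnectedOn Set.univ

/-- No edge is a loop. -/
def Loopless (G : Multigraph V E) : Prop := ∀ e : E, ¬ (G.ends e).IsDiag

/-- A spanning tree: a minimally connecting spanning set of edges. -/
def IsSpanningTree (G : Multigraph V E) (S : Finset E) : Prop :=
  G.ConnectedOn (S : Set E) ∧ ∀ e ∈ S, ¬ G.ConnectedOn ((S : Set E) \ {e})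

/-- The complexity: the number of spanning trees. -/
noncomputable def complexity (G : Multigraph V E) : ℕ :=
  {S : Finset E | G.IsSpanningTree S}.ncard

/-- Number of edges joining `x` and `y`. -/
noncomputable def edgeCount (G : Multigraph V E) (x y : V) : ℕ :=
  {e : E | G.ends e = s(x, y)}.ncard

/-- The Laplacian-type intersection matrix. -/
noncomputable def lap (G : Multigraph V E) [Fintype V] [DecidableEq V] (i j : V) : ℤ :=
  if i = j then -(∑ u ∈ Finset.univ.erase i, (G.edgeCount i u : ℤ))
  else (G.edgeCount i j : ℤ)

/-- The lattice of multidegrees of twisters: span of the columns of the Laplacian. -/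
noncomputable def lapLattice (G : Multigraph V E) [Fintype V] [DecidableEq V] :
    AddSubgroup (V → ℤ) :=
  AddSubgroup.closure (Set.range fun j => fun i => G.lap i j)

/-- The subgroup of `ℤ^V` of vectors with zero coordinate sum. -/
def zeroSum (V : Type) [Fintype V] : AddSubgroup (V → ℤ) where
  carrier := {z | ∑ v, z v = 0}
  add_mem' := by
    intro a b ha hb
    simp only [Set.mem_setOf_eq] at *
    simp [Finset.sum_add_distrib, ha, hb]
  zero_mem' := by simp
  neg_mem' := by
    intro a ha
    simp only [Set.mem_setOf_eq] at *
    simp [ha]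

/-- The degree class group of a multigraph. -/
noncomputable def DCG (G : Multigraph V E) [Fintype V] [DecidableEq V] : Type :=
  zeroSum V ⧸ (G.lapLattice.addSubgroupOf (zeroSum V))

noncomputable instance (G : Multigraph V E) [Fintype V] [DecidableEq V] :
    AddCommGroup (G.DCG) :=
  QuotientAddGroup.Quotient.addCommGroup _

/-- The class in the DCG of an element of the zero-sum lattice. -/
noncomputable def DCGclass (G : Multigraph V E) [Fintype V] [DecidableEq V]
    (z : zeroSum V) : G.DCG :=
  QuotientAddGroup.mk z

/-- The element `e_x - e_y` of the zero-sum lattice. -/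
def eDiff (V : Type) [Fintype V] [DecidableEq V] (x y : V) : zeroSum V :=
  ⟨fun v => (if v = x then 1 else 0) - (if v = y then 1 else 0), by
    show ∑ v : V, ((if v = x then (1:ℤ) else 0) - (if v = y then 1 else 0)) = 0
    simp [Finset.sum_sub_distrib]⟩

end Multigraph

namespace Multigraph
variable {V E : Type}

/-- The `j`-th vertex along the subdivision chain from `a` to `b` with `k` new vertices. -/
def subVert (a b : V) (k : ℕ) (j : ℕ) : V ⊕ Fin k :=
  if _h0 : j = 0 then Sum.inl a
  else if h : j ≤ k then Sum.inr ⟨j - 1, by omega⟩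
  else Sum.inl b

/-- Subdivide the edge `l` (with endpoints `a`, `b`) into a path of `k+1` edges
through `k` new vertices. -/
def subdivide (G : Multigraph V E) (l : E) (a b : V) (k : ℕ) :
    Multigraph (V ⊕ Fin k) ({f : E // f ≠ l} ⊕ Fin (k + 1)) where
  ends
  | Sum.inl f => (G.ends f.1).map Sum.inl
  | Sum.inr i => s(subVert a b k i.1, subVert a b k (i.1 + 1))

/-- Delete the edge `l`. -/
def deleteEdge (G : Multigraph V E) (l : E) : Multigraph V {f : E // f ≠ l} :=
  ⟨fun f => G.ends f.1⟩

end Multigraph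

namespace SubAux
open Multigraph Relation Finset

attribute [local instance] Classical.propDecidable

variable {V E : Type}

lemma adj_symm (G : Multigraph V E) (S : Set E) : Symmetric (G.Adj S) := by
  rintro x y ⟨hxy, e, he, hee⟩
  exact ⟨hxy.symm, e, he, by rw [hee, Sym2.eq_swap]⟩

lemma rtg_symm {G : Multigraph V E} {S : Set E} {x y : V}
    (h : Relation.ReflTransGen (G.Adj S) x y) : Relation.ReflTransGen (G.Adj S) y x :=
  (@Relation.ReflTransGen.stdSymm _ _ ⟨adj_symm G S⟩).symm _ _ h

lemma rtg_lift {α β : Type*} {R : α → α → Prop} {S : β → β → Prop} (f : α → β)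
    (h : ∀ x y, R x y → Relation.ReflTransGen S (f x) (f y)) {x y : α}
    (hx : Relation.ReflTransGen R x y) : Relation.ReflTransGen S (f x) (f y) := by
  induction hx with
  | refl => exact .refl
  | tail _ hstep ih => exact ih.trans (h _ _ hstep)

lemma rtg_invariant {α : Type*} {R : α → α → Prop} (ψ : α → Prop)
    (h : ∀ x y, R x y → (ψ x ↔ ψ y)) {x y : α}
    (hx : Relation.ReflTransGen R x y) : ψ x ↔ ψ y := by
  induction hx with
  | refl => rfl
  | tail _ hstep ih => exact ih.trans (h _ _ hstep)

variable (l : E) (k : ℕ)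

def valEmb : {f : E // f ≠ l} ↪ E := ⟨Subtype.val, Subtype.val_injective⟩
def inlE : {f : E // f ≠ l} ↪ ({f : E // f ≠ l} ⊕ Fin (k+1)) := ⟨Sum.inl, Sum.inl_injective⟩
def inrE : Fin (k+1) ↪ ({f : E // f ≠ l} ⊕ Fin (k+1)) := ⟨Sum.inr, Sum.inr_injective⟩

noncomputable def phi1 (T : Finset {f : E // f ≠ l}) : Finset ({f : E // f ≠ l} ⊕ Fin (k+1)) :=
  T.map (inlE l k) ∪ Finset.univ.map (inrE l k)

noncomputable def phi2 (i : Fin (k+1)) (T : Finset {f : E // f ≠ l}) :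
    Finset ({f : E // f ≠ l} ⊕ Fin (k+1)) :=
  T.map (inlE l k) ∪ (Finset.univ.erase i).map (inrE l k)

@[simp] lemma mem_phi1_inl {T f} : Sum.inl f ∈ phi1 l k T ↔ f ∈ T := by
  simp [phi1, inlE, inrE]
@[simp] lemma mem_phi1_inr {T} (i : Fin (k+1)) : Sum.inr i ∈ phi1 l k T := by
  simp [phi1, inlE, inrE]
@[simp] lemma mem_phi2_inl {i T f} : Sum.inl f ∈ phi2 l k i T ↔ f ∈ T := by
  simp [phi2, inlE, inrE]
@[simp] lemma mem_phi2_inr {i T} (m : Fin (k+1)) : Sum.inr m ∈ phi2 l k i T ↔ m ≠ i := by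
  simp [phi2, inlE, inrE]

variable (a b : V)

@[simp] lemma subVert_zero : subVert a b k 0 = Sum.inl a := by simp [subVert]
@[simp] lemma subVert_last : subVert a b k (k+1) = Sum.inl b := by
  unfold subVert
  rw [dif_neg (by omega), dif_neg (by omega)]
lemma subVert_mid (j : ℕ) (h1 : 1 ≤ j) (h2 : j ≤ k) :
    subVert a b k j = Sum.inr ⟨j-1, by omega⟩ := by
  unfold subVert
  rw [dif_neg (by omega), dif_pos h2]

lemma subVert_ne (hab : a ≠ b) (j : ℕ) (hj : j ≤ k) :
    subVert a b k j ≠ subVert a b k (j+1) := by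
  rcases Nat.eq_zero_or_pos j with h0 | h0
  · subst h0
    rcases Nat.eq_zero_or_pos k with hk | hk
    · subst hk; rw [subVert_zero, show (0:ℕ)+1 = 0+1 from rfl, subVert_last]
      simpa using hab
    · rw [subVert_zero, subVert_mid _ _ _ 1 le_rfl hk]; simp
  · rw [subVert_mid _ _ _ j h0 hj]
    rcases Nat.lt_or_ge j k with h | h
    · rw [subVert_mid _ _ _ (j+1) (by omega) (by omega)]
      simp only [ne_eq, Sum.inr.injEq, Fin.mk.injEq]
      omega
    · have : j = k := by omega
      subst this
      rw [subVert_last]; simp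

end SubAux


namespace SubAux
open Multigraph Relation Finset
attribute [local instance] Classical.propDecidable
variable {V E : Type} (G : Multigraph V E) (l : E) (a b : V) (k : ℕ)

lemma ends_inr (i : Fin (k+1)) :
    (G.subdivide l a b k).ends (Sum.inr i) = s(subVert a b k i.1, subVert a b k (i.1+1)) := rfl

lemma ends_inl (f : {f : E // f ≠ l}) :
    (G.subdivide l a b k).ends (Sum.inl f) = (G.ends f.1).map Sum.inl := rfl

lemma chain_conn (hab : a ≠ b) (S : Set ({f : E // f ≠ l} ⊕ Fin (k+1)))
    (j m : ℕ) (hjm : j ≤ m) (hm : m ≤ k+1)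
    (hS : ∀ t : ℕ, j ≤ t → t < m → ∀ (ht : t < k+1), Sum.inr (⟨t, ht⟩ : Fin (k+1)) ∈ S) :
    Relation.ReflTransGen ((G.subdivide l a b k).Adj S) (subVert a b k j) (subVert a b k m) := by
  induction m, hjm using Nat.le_induction with
  | base => exact .refl
  | succ m hm' ih =>
    refine (ih (by omega) (fun t ht1 ht2 ht => hS t ht1 (by omega) ht)).tail ?_
    exact ⟨subVert_ne k a b hab m (by omega), Sum.inr ⟨m, by omega⟩,
      hS m hm' (by omega) (by omega), ends_inr G l a b k ⟨m, by omega⟩⟩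

lemma adj_inl_cases {u v : V ⊕ Fin k}
    (f : {f : E // f ≠ l}) (hends : (G.ends f.1).map Sum.inl = s(u, v)) :
    ∃ p q : V, u = Sum.inl p ∧ v = Sum.inl q ∧ G.ends f.1 = s(p, q) := by
  generalize hz : G.ends f.1 = z at hends
  induction z using Sym2.ind with
  | _ p q =>
    rw [Sym2.map_pair_eq] at hends
    rcases Sym2.eq_iff.mp hends with ⟨h1, h2⟩ | ⟨h1, h2⟩
    · exact ⟨p, q, h1.symm, h2.symm, rfl⟩
    · exact ⟨q, p, h2.symm, h1.symm, Sym2.eq_swap⟩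

def projA : (V ⊕ Fin k) → V := Sum.elim id (fun _ => a)
def projB (i : Fin (k+1)) : (V ⊕ Fin k) → V :=
  Sum.elim id (fun t => if (t:ℕ)+1 ≤ (i:ℕ) then a else b)

lemma projA_subVert (j : ℕ) (hj : j ≤ k+1) :
    projA a k (subVert a b k j) = if j = k+1 then b else a := by
  rcases Nat.eq_zero_or_pos j with h0 | h0
  · subst h0; rw [subVert_zero, if_neg (by omega)]; rfl
  · rcases Nat.lt_or_ge j (k+1) with h | h
    · rw [subVert_mid k a b j h0 (by omega), if_neg (by omega)]; rfl
    · have : j = k+1 := by omega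
      subst this; rw [subVert_last, if_pos rfl]; rfl

lemma projB_subVert (i : Fin (k+1)) (j : ℕ) (hj : j ≤ k+1) :
    projB a b k i (subVert a b k j) = if j ≤ (i:ℕ) then a else b := by
  rcases Nat.eq_zero_or_pos j with h0 | h0
  · subst h0; rw [subVert_zero]; simp [projB]
  · rcases Nat.lt_or_ge j (k+1) with h | h
    · rw [subVert_mid k a b j h0 (by omega)]
      simp only [projB, Sum.elim_inr]
      have hj1 : j - 1 + 1 = j := by omega
      rw [hj1]
    · have : j = k+1 := by omega
      subst this; rw [subVert_last]
      simp only [projB, Sum.elim_inl, id]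
      rw [if_neg (by omega)]

end SubAux


namespace SubAux
open Multigraph Relation Finset
attribute [local instance] Classical.propDecidable
variable {V E : Type} (G : Multigraph V E) (l : E) (a b : V) (k : ℕ)

lemma conn_phi1 (hab : a ≠ b) (hl : G.ends l = s(a, b)) (T : Finset {f : E // f ≠ l}) :
    (G.subdivide l a b k).ConnectedOn ↑(phi1 l k T) ↔
      G.ConnectedOn ↑(insert l (T.map (valEmb l))) := by
  constructor
  · intro h x y
    have step : ∀ u v, (G.subdivide l a b k).Adj (↑(phi1 l k T)) u v →
        Relation.ReflTransGen (G.Adj ↑(insert l (T.map (valEmb l)))) (projA a k u) (projA a k v) := by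
      rintro u v ⟨huv, e, he, hee⟩
      cases e with
      | inl f =>
        obtain ⟨p, q, hu, hv, hpq⟩ := adj_inl_cases G l k f hee
        subst hu; subst hv
        refine Relation.ReflTransGen.single ⟨?_, f.1, ?_, hpq⟩
        · intro hps; exact huv (congrArg Sum.inl (by simpa [projA] using hps))
        · exact Finset.mem_insert_of_mem (Finset.mem_map_of_mem _ ((mem_phi1_inl l k).mp he))
      | inr i =>
        have main : Relation.ReflTransGen (G.Adj ↑(insert l (T.map (valEmb l))))
            (projA a k (subVert a b k i.1)) (projA a k (subVert a b k (i.1+1))) := by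
          rcases Nat.lt_or_ge (i.1+1) (k+1) with h' | h'
          · rw [projA_subVert a b k i.1 (by omega), projA_subVert a b k (i.1+1) (by omega),
              if_neg (by omega), if_neg (by omega)]
          · rw [projA_subVert a b k i.1 (by omega), projA_subVert a b k (i.1+1) (by omega),
              if_neg (by omega), if_pos (by omega)]
            exact .single ⟨hab, l, Finset.mem_insert_self _ _, hl⟩
        rcases Sym2.eq_iff.mp hee with ⟨h1, h2⟩ | ⟨h1, h2⟩
        · rw [← h1, ← h2]; exact main
        · rw [← h1, ← h2]; exact rtg_symm main
    have := rtg_lift (projA a k) step (h (Sum.inl x) (Sum.inl y))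
    simpa [projA] using this
  · intro h
    have keyV : ∀ x : V, Relation.ReflTransGen ((G.subdivide l a b k).Adj ↑(phi1 l k T))
        (Sum.inl x) (Sum.inl a) := by
      intro x
      have step : ∀ x y : V, G.Adj ↑(insert l (T.map (valEmb l))) x y →
          Relation.ReflTransGen ((G.subdivide l a b k).Adj ↑(phi1 l k T))
            (Sum.inl x) (Sum.inl y) := by
        rintro x y ⟨hxy, e, he, hee⟩
        rcases Finset.mem_insert.mp he with heq | he'
        · rw [heq, hl] at hee
          have hchain : Relation.ReflTransGen ((G.subdivide l a b k).Adj ↑(phi1 l k T))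
              (subVert a b k 0) (subVert a b k (k+1)) :=
            chain_conn G l a b k hab _ 0 (k+1) (by omega) le_rfl
              (fun t _ _ ht => mem_phi1_inr l k ⟨t, ht⟩)
          rw [subVert_zero, subVert_last] at hchain
          rcases Sym2.eq_iff.mp hee with ⟨rfl, rfl⟩ | ⟨rfl, rfl⟩
          · exact hchain
          · exact rtg_symm hchain
        · obtain ⟨f, hf, rfl⟩ := Finset.mem_map.mp he'
          refine .single ⟨by simpa using hxy, Sum.inl f, (mem_phi1_inl l k).mpr hf, ?_⟩
          show (G.ends f.1).map Sum.inl = _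
          rw [show G.ends ((valEmb l) f) = G.ends f.1 from rfl] at hee
          rw [hee, Sym2.map_pair_eq]
      exact rtg_lift Sum.inl step (h x a)
    have keyT : ∀ t : Fin k, Relation.ReflTransGen ((G.subdivide l a b k).Adj ↑(phi1 l k T))
        (Sum.inr t) (Sum.inl a) := by
      intro t
      have hchain := chain_conn G l a b k hab ↑(phi1 l k T) 0 (t.1+1) (by omega) (by omega)
        (fun s _ _ hs => mem_phi1_inr l k ⟨s, hs⟩)
      rw [subVert_zero, subVert_mid k a b (t.1+1) (by omega) (by omega)] at hchain
      simpa using rtg_symm hchain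
    intro u v
    have allkey : ∀ u : V ⊕ Fin k, Relation.ReflTransGen
        ((G.subdivide l a b k).Adj ↑(phi1 l k T)) u (Sum.inl a) := by
      rintro (x | t)
      exacts [keyV x, keyT t]
    exact (allkey u).trans (rtg_symm (allkey v))

end SubAux


namespace SubAux
open Multigraph Relation Finset
attribute [local instance] Classical.propDecidable
variable {V E : Type} (G : Multigraph V E) (l : E) (a b : V) (k : ℕ)

lemma conn_phi2 (hab : a ≠ b) (i : Fin (k+1)) (T : Finset {f : E // f ≠ l}) :
    (G.subdivide l a b k).ConnectedOn ↑(phi2 l k i T) ↔ (G.deleteEdge l).ConnectedOn ↑T := by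
  constructor
  · intro h x y
    have step : ∀ u v, (G.subdivide l a b k).Adj (↑(phi2 l k i T)) u v →
        Relation.ReflTransGen ((G.deleteEdge l).Adj ↑T) (projB a b k i u) (projB a b k i v) := by
      rintro u v ⟨huv, e, he, hee⟩
      cases e with
      | inl f =>
        obtain ⟨p, q, hu, hv, hpq⟩ := adj_inl_cases G l k f hee
        subst hu; subst hv
        refine .single ⟨fun hps => huv (congrArg Sum.inl (by simpa [projB] using hps)),
          f, (mem_phi2_inl l k).mp he, ?_⟩
        show G.ends f.1 = _
        simpa [projB] using hpq
      | inr m =>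
        have hmi : m ≠ i := (mem_phi2_inr l k m).mp he
        have hvmi := Fin.val_ne_of_ne hmi
        have heq : projB a b k i (subVert a b k m.1) = projB a b k i (subVert a b k (m.1+1)) := by
          rw [projB_subVert a b k i m.1 (by omega), projB_subVert a b k i (m.1+1) (by omega)]
          by_cases hc : m.1+1 ≤ i.1
          · rw [if_pos (by omega), if_pos hc]
          · rw [if_neg (by omega), if_neg hc]
        rcases Sym2.eq_iff.mp hee with ⟨h1, h2⟩ | ⟨h1, h2⟩
        · rw [← h1, ← h2, heq]
        · rw [← h1, ← h2, heq]
    have := rtg_lift (projB a b k i) step (h (Sum.inl x) (Sum.inl y))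
    simpa [projB] using this
  · intro h
    have keyV : ∀ x y : V, Relation.ReflTransGen ((G.subdivide l a b k).Adj ↑(phi2 l k i T))
        (Sum.inl x) (Sum.inl y) := by
      intro x y
      refine rtg_lift Sum.inl ?_ (h x y)
      rintro x y ⟨hxy, f, hf, hee⟩
      refine .single ⟨by simpa using hxy, Sum.inl f, (mem_phi2_inl l k).mpr hf, ?_⟩
      show (G.ends f.1).map Sum.inl = _
      rw [show (G.deleteEdge l).ends f = G.ends f.1 from rfl] at hee
      rw [hee, Sym2.map_pair_eq]
    have keyPos : ∀ j : ℕ, j ≤ k+1 → Relation.ReflTransGen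
        ((G.subdivide l a b k).Adj ↑(phi2 l k i T)) (subVert a b k j) (Sum.inl a) := by
      intro j hj
      rcases le_or_gt j i.1 with hji | hji
      · have hchain := chain_conn G l a b k hab ↑(phi2 l k i T) 0 j (by omega) hj
          (fun t ht1 ht2 ht => (mem_phi2_inr l k ⟨t, ht⟩).mpr
            (fun hcon => by have := congrArg Fin.val hcon; simp at this; omega))
        rw [subVert_zero] at hchain
        exact rtg_symm hchain
      · have hchain := chain_conn G l a b k hab ↑(phi2 l k i T) j (k+1) (by omega) le_rfl
          (fun t ht1 ht2 ht => (mem_phi2_inr l k ⟨t, ht⟩).mpr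
            (fun hcon => by have := congrArg Fin.val hcon; simp at this; omega))
        rw [subVert_last] at hchain
        exact hchain.trans (keyV b a)
    intro u v
    have allkey : ∀ u : V ⊕ Fin k, Relation.ReflTransGen
        ((G.subdivide l a b k).Adj ↑(phi2 l k i T)) u (Sum.inl a) := by
      rintro (x | t)
      · exact keyV x a
      · have := keyPos (t.1+1) (by omega)
        rw [subVert_mid k a b (t.1+1) (by omega) (by omega)] at this
        simpa using this
    exact (allkey u).trans (rtg_symm (allkey v))

def psi (k : ℕ) (i j : Fin (k+1)) : V ⊕ Fin k → Prop :=
  Sum.elim (fun _ => False) (fun t => i.1 ≤ t.1 ∧ t.1 < j.1)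

@[simp] lemma psi_inl (i j : Fin (k+1)) (x : V) : psi k i j (Sum.inl x) = False := rfl
@[simp] lemma psi_inr (i j : Fin (k+1)) (t : Fin k) :
    psi (V := V) k i j (Sum.inr t) = (i.1 ≤ t.1 ∧ t.1 < j.1) := rfl

lemma not_conn_two (hab : a ≠ b) (S : Set ({f : E // f ≠ l} ⊕ Fin (k+1))) (i j : Fin (k+1))
    (hij : i.1 < j.1) (hi : Sum.inr i ∉ S) (hj : Sum.inr j ∉ S) :
    ¬ (G.subdivide l a b k).ConnectedOn S := by
  intro h
  have ψ_subVert : ∀ p : ℕ, p ≤ k+1 →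
      ((psi (V := V) k i j (subVert a b k p)) ↔ (i.1+1 ≤ p ∧ p ≤ j.1)) := by
    intro p hp
    rcases Nat.eq_zero_or_pos p with h0 | h0
    · subst h0; rw [subVert_zero]
      exact iff_of_false id (by omega)
    · rcases Nat.lt_or_ge p (k+1) with hpk | hpk
      · rw [subVert_mid k a b p h0 (by omega)]
        simp only [psi_inr]
        omega
      · have hp1 : p = k+1 := by omega
        subst hp1; rw [subVert_last]
        exact iff_of_false id (by have := j.isLt; omega)
  have inv : ∀ u v, (G.subdivide l a b k).Adj S u v → (psi k i j u ↔ psi k i j v) := by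
    rintro u v ⟨huv, e, he, hee⟩
    cases e with
    | inl f =>
      obtain ⟨p, q, rfl, rfl, -⟩ := adj_inl_cases G l k f hee
      simp
    | inr m =>
      have hmi : m ≠ i := fun hc => hi (hc ▸ he)
      have hmj : m ≠ j := fun hc => hj (hc ▸ he)
      have hvi := Fin.val_ne_of_ne hmi
      have hvj := Fin.val_ne_of_ne hmj
      have key : (psi (V := V) k i j (subVert a b k m.1) ↔
          psi (V := V) k i j (subVert a b k (m.1+1))) := by
        rw [ψ_subVert m.1 (by omega), ψ_subVert (m.1+1) (by omega)]
        omega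
      rcases Sym2.eq_iff.mp hee with ⟨h1, h2⟩ | ⟨h1, h2⟩
      · rw [← h1, ← h2]; exact key
      · rw [← h1, ← h2]; exact key.symm
  have hik : i.1 < k := by have := j.2; omega
  have hcon := rtg_invariant (psi k i j) inv (h (Sum.inl a) (Sum.inr ⟨i.1, hik⟩))
  simp only [psi_inl, psi_inr] at hcon
  exact hcon.mpr ⟨le_rfl, hij⟩

end SubAux


namespace SubAux
open Multigraph Relation Finset
attribute [local instance] Classical.propDecidable
variable {V E : Type} (G : Multigraph V E) (l : E) (a b : V) (k : ℕ)

lemma sdiff1 (T : Finset {f : E // f ≠ l}) (f : {f : E // f ≠ l}) :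
    (↑(phi1 l k T) : Set ({f : E // f ≠ l} ⊕ Fin (k+1))) \ {Sum.inl f} =
      ↑(phi1 l k (T.erase f)) := by
  ext e
  cases e with
  | inl g => simp [Set.mem_diff]; tauto
  | inr m => simp [Set.mem_diff]

lemma sdiff2 (T : Finset {f : E // f ≠ l}) (m : Fin (k+1)) :
    (↑(phi1 l k T) : Set ({f : E // f ≠ l} ⊕ Fin (k+1))) \ {Sum.inr m} =
      ↑(phi2 l k m T) := by
  ext e
  cases e with
  | inl g => simp [Set.mem_diff]
  | inr m' => simp [Set.mem_diff]

lemma sdiff3 (i : Fin (k+1)) (T : Finset {f : E // f ≠ l}) (f : {f : E // f ≠ l}) :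
    (↑(phi2 l k i T) : Set ({f : E // f ≠ l} ⊕ Fin (k+1))) \ {Sum.inl f} =
      ↑(phi2 l k i (T.erase f)) := by
  ext e
  cases e with
  | inl g => simp [Set.mem_diff]; tauto
  | inr m' => simp [Set.mem_diff]

lemma sdiff4 (T : Finset {f : E // f ≠ l}) (f : {f : E // f ≠ l}) :
    (↑(insert l (T.map (valEmb l))) : Set E) \ {f.1} =
      ↑(insert l ((T.erase f).map (valEmb l))) := by
  ext e
  simp only [Set.mem_diff, Finset.coe_insert, Set.mem_insert_iff, Finset.mem_coe,
    Finset.mem_map, Finset.mem_erase, Set.mem_singleton_iff, valEmb, Function.Embedding.coeFn_mk]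
  constructor
  · rintro ⟨(rfl | ⟨g, hg, rfl⟩), hne⟩
    · exact Or.inl rfl
    · exact Or.inr ⟨g, ⟨fun hgf => hne (by rw [hgf]), hg⟩, rfl⟩
  · rintro (rfl | ⟨g, ⟨hgf, hg⟩, rfl⟩)
    · exact ⟨Or.inl rfl, fun h => f.2 h.symm⟩
    · exact ⟨Or.inr ⟨g, hg, rfl⟩, fun h => hgf (Subtype.ext h)⟩

lemma sdiff5 (T : Finset {f : E // f ≠ l}) :
    (↑(insert l (T.map (valEmb l))) : Set E) \ {l} = ↑(T.map (valEmb l)) := by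
  ext e
  simp only [Set.mem_diff, Finset.coe_insert, Set.mem_insert_iff, Finset.mem_coe,
    Finset.mem_map, Set.mem_singleton_iff, valEmb, Function.Embedding.coeFn_mk]
  constructor
  · rintro ⟨(rfl | ⟨g, hg, rfl⟩), hne⟩
    · exact absurd rfl hne
    · exact ⟨g, hg, rfl⟩
  · rintro ⟨g, hg, rfl⟩
    exact ⟨Or.inr ⟨g, hg, rfl⟩, g.2⟩

lemma sdiff6 (T : Finset {f : E // f ≠ l}) (f : {f : E // f ≠ l}) :
    (↑(T.map (valEmb l)) : Set E) \ {f.1} = ↑((T.erase f).map (valEmb l)) := by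
  ext e
  simp only [Set.mem_diff, Finset.mem_coe, Finset.mem_map, Finset.mem_erase,
    Set.mem_singleton_iff, valEmb, Function.Embedding.coeFn_mk]
  constructor
  · rintro ⟨⟨g, hg, rfl⟩, hne⟩
    exact ⟨g, ⟨fun hgf => hne (by rw [hgf]), hg⟩, rfl⟩
  · rintro ⟨g, ⟨hgf, hg⟩, rfl⟩
    exact ⟨⟨g, hg, rfl⟩, fun h => hgf (Subtype.ext h)⟩

lemma adj_del (T : Finset {f : E // f ≠ l}) (x y : V) :
    (G.deleteEdge l).Adj ↑T x y ↔ G.Adj ↑(T.map (valEmb l)) x y := by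
  constructor
  · rintro ⟨hxy, f, hf, hee⟩
    exact ⟨hxy, f.1, Finset.mem_coe.mpr (Finset.mem_map_of_mem _ (Finset.mem_coe.mp hf)), hee⟩
  · rintro ⟨hxy, e, he, hee⟩
    obtain ⟨f, hf, rfl⟩ := Finset.mem_map.mp (Finset.mem_coe.mp he)
    exact ⟨hxy, f, hf, hee⟩

lemma connectedOn_del (T : Finset {f : E // f ≠ l}) :
    (G.deleteEdge l).ConnectedOn ↑T ↔ G.ConnectedOn ↑(T.map (valEmb l)) := by
  constructor <;> intro h x y
  · exact Relation.ReflTransGen.mono (fun u v huv => (adj_del G l T u v).mp huv) _ _ (h x y)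
  · exact Relation.ReflTransGen.mono (fun u v huv => (adj_del G l T u v).mpr huv) _ _ (h x y)

lemma tree_del (T : Finset {f : E // f ≠ l}) :
    (G.deleteEdge l).IsSpanningTree T ↔ G.IsSpanningTree (T.map (valEmb l)) := by
  constructor
  · rintro ⟨hc, hmin⟩
    refine ⟨(connectedOn_del G l T).mp hc, ?_⟩
    intro e he
    obtain ⟨f, hf, rfl⟩ := Finset.mem_map.mp he
    rw [show (valEmb l) f = f.1 from rfl, sdiff6, ← connectedOn_del, Finset.coe_erase]
    exact hmin f hf
  · rintro ⟨hc, hmin⟩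
    refine ⟨(connectedOn_del G l T).mpr hc, ?_⟩
    intro f hf
    rw [← Finset.coe_erase, connectedOn_del, ← sdiff6]
    exact hmin f.1 (Finset.mem_map_of_mem _ hf)

lemma tree_phi1 (hab : a ≠ b) (hl : G.ends l = s(a, b)) (T : Finset {f : E // f ≠ l}) :
    (G.subdivide l a b k).IsSpanningTree (phi1 l k T) ↔
      G.IsSpanningTree (insert l (T.map (valEmb l))) := by
  constructor
  · rintro ⟨hc, hmin⟩
    refine ⟨(conn_phi1 G l a b k hab hl T).mp hc, ?_⟩
    intro e he
    rcases Finset.mem_insert.mp he with heq | he'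
    · rw [heq, sdiff5, ← connectedOn_del]
      have h0 := hmin (Sum.inr 0) (mem_phi1_inr l k 0)
      rw [sdiff2, conn_phi2 G l a b k hab 0 T] at h0
      exact h0
    · obtain ⟨f, hf, rfl⟩ := Finset.mem_map.mp he'
      rw [show (valEmb l) f = f.1 from rfl, sdiff4, ← conn_phi1 G l a b k hab hl (T.erase f)]
      have h0 := hmin (Sum.inl f) ((mem_phi1_inl l k).mpr hf)
      rw [sdiff1] at h0
      exact h0
  · rintro ⟨hc, hmin⟩
    refine ⟨(conn_phi1 G l a b k hab hl T).mpr hc, ?_⟩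
    intro e he
    cases e with
    | inl f =>
      have hf : f ∈ T := (mem_phi1_inl l k).mp he
      rw [sdiff1, conn_phi1 G l a b k hab hl (T.erase f), ← sdiff4]
      exact hmin f.1 (Finset.mem_insert_of_mem (Finset.mem_map_of_mem _ hf))
    | inr m =>
      rw [sdiff2, conn_phi2 G l a b k hab m T]
      have h0 := hmin l (Finset.mem_insert_self _ _)
      rw [sdiff5, ← connectedOn_del] at h0
      exact h0

lemma tree_phi2 (hab : a ≠ b) (i : Fin (k+1)) (T : Finset {f : E // f ≠ l}) :
    (G.subdivide l a b k).IsSpanningTree (phi2 l k i T) ↔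
      (G.deleteEdge l).IsSpanningTree T := by
  constructor
  · rintro ⟨hc, hmin⟩
    refine ⟨(conn_phi2 G l a b k hab i T).mp hc, ?_⟩
    intro f hf
    rw [← Finset.coe_erase, ← conn_phi2 G l a b k hab i (T.erase f), ← sdiff3]
    exact hmin (Sum.inl f) ((mem_phi2_inl l k).mpr hf)
  · rintro ⟨hc, hmin⟩
    refine ⟨(conn_phi2 G l a b k hab i T).mpr hc, ?_⟩
    intro e he
    cases e with
    | inl f =>
      have hf : f ∈ T := (mem_phi2_inl l k).mp he
      rw [sdiff3, conn_phi2 G l a b k hab i (T.erase f), Finset.coe_erase]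
      exact hmin f hf
    | inr m =>
      have hmi : m ≠ i := (mem_phi2_inr l k m).mp he
      have hi' : Sum.inr i ∉
          (↑(phi2 l k i T) : Set ({f : E // f ≠ l} ⊕ Fin (k+1))) \ {Sum.inr m} := by
        simp [Set.mem_diff]
      have hm' : Sum.inr m ∉
          (↑(phi2 l k i T) : Set ({f : E // f ≠ l} ⊕ Fin (k+1))) \ {Sum.inr m} := by
        simp [Set.mem_diff]
      have hvne : m.1 ≠ i.1 := Fin.val_ne_of_ne hmi
      rcases Nat.lt_or_ge i.1 m.1 with hlt | hge
      · exact not_conn_two G l a b k hab _ i m hlt hi' hm'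
      · exact not_conn_two G l a b k hab _ m i (by omega) hm' hi'

end SubAux


namespace SubAux
open Multigraph Relation Finset
attribute [local instance] Classical.propDecidable
variable {V E : Type} (G : Multigraph V E) (l : E) (a b : V) (k : ℕ)

section withFintype
variable [Fintype E]

noncomputable def Tof (S' : Finset ({f : E // f ≠ l} ⊕ Fin (k+1))) : Finset {f : E // f ≠ l} :=
  Finset.univ.filter (fun f => Sum.inl f ∈ S')

lemma eq_phi1 (S' : Finset ({f : E // f ≠ l} ⊕ Fin (k+1)))
    (h : ∀ i : Fin (k+1), Sum.inr i ∈ S') : S' = phi1 l k (Tof l k S') := by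
  ext e
  cases e with
  | inl f => simp [Tof]
  | inr i => simp [h i]

lemma eq_phi2 (S' : Finset ({f : E // f ≠ l} ⊕ Fin (k+1))) (i : Fin (k+1))
    (hi : Sum.inr i ∉ S') (h : ∀ m, m ≠ i → Sum.inr m ∈ S') :
    S' = phi2 l k i (Tof l k S') := by
  ext e
  cases e with
  | inl f => simp [Tof]
  | inr m =>
    rw [mem_phi2_inr]
    exact ⟨fun hm hcon => hi (hcon ▸ hm), h m⟩

lemma tree_iff (hab : a ≠ b) (hl : G.ends l = s(a, b))
    (S' : Finset ({f : E // f ≠ l} ⊕ Fin (k+1))) :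
    (G.subdivide l a b k).IsSpanningTree S' ↔
      ((∃ T, G.IsSpanningTree (insert l (T.map (valEmb l))) ∧ S' = phi1 l k T) ∨
       (∃ i T, (G.deleteEdge l).IsSpanningTree T ∧ S' = phi2 l k i T)) := by
  constructor
  · intro h
    by_cases hall : ∀ i : Fin (k+1), Sum.inr i ∈ S'
    · left
      refine ⟨Tof l k S', ?_, eq_phi1 l k S' hall⟩
      rw [← tree_phi1 G l a b k hab hl, ← eq_phi1 l k S' hall]
      exact h
    · push_neg at hall
      obtain ⟨i, hi⟩ := hall
      have hrest : ∀ m, m ≠ i → Sum.inr m ∈ S' := by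
        intro m hm
        by_contra hm'
        have hvne : m.1 ≠ i.1 := Fin.val_ne_of_ne hm
        rcases Nat.lt_or_ge i.1 m.1 with hlt | hge
        · exact not_conn_two G l a b k hab ↑S' i m hlt (by simpa using hi)
            (by simpa using hm') h.1
        · exact not_conn_two G l a b k hab ↑S' m i (by omega) (by simpa using hm')
            (by simpa using hi) h.1
      right
      refine ⟨i, Tof l k S', ?_, eq_phi2 l k S' i hi hrest⟩
      rw [← tree_phi2 G l a b k hab i, ← eq_phi2 l k S' i hi hrest]
      exact h
  · rintro (⟨T, hT, rfl⟩ | ⟨i, T, hT, rfl⟩)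
    · exact (tree_phi1 G l a b k hab hl T).mpr hT
    · exact (tree_phi2 G l a b k hab i T).mpr hT

end withFintype

lemma phi1_inj : Function.Injective (phi1 l k (E := E)) := by
  intro T T' h
  ext f
  constructor <;> intro hf
  · have h1 : Sum.inl f ∈ phi1 l k T := (mem_phi1_inl l k).mpr hf
    rw [h] at h1
    exact (mem_phi1_inl l k).mp h1
  · have h1 : Sum.inl f ∈ phi1 l k T' := (mem_phi1_inl l k).mpr hf
    rw [← h] at h1
    exact (mem_phi1_inl l k).mp h1

lemma phi2_inj :
    Function.Injective (fun p : Fin (k+1) × Finset {f : E // f ≠ l} => phi2 l k p.1 p.2) := by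
  rintro ⟨i, T⟩ ⟨i', T'⟩ h
  simp only at h
  have hii : i = i' := by
    by_contra hne
    have h1 : Sum.inr i' ∈ phi2 l k i T := (mem_phi2_inr l k i').mpr (Ne.symm hne)
    rw [h] at h1
    exact ((mem_phi2_inr l k i').mp h1) rfl
  subst hii
  have hTT : T = T' := by
    ext f
    constructor <;> intro hf
    · have h1 : Sum.inl f ∈ phi2 l k i T := (mem_phi2_inl l k).mpr hf
      rw [h] at h1
      exact (mem_phi2_inl l k).mp h1
    · have h1 : Sum.inl f ∈ phi2 l k i T' := (mem_phi2_inl l k).mpr hf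
      rw [← h] at h1
      exact (mem_phi2_inl l k).mp h1
  rw [hTT]

lemma ins_inj :
    Function.Injective (fun T : Finset {f : E // f ≠ l} => insert l (T.map (valEmb l))) := by
  have key : ∀ (A B : Finset {f : E // f ≠ l}),
      insert l (A.map (valEmb l)) = insert l (B.map (valEmb l)) → ∀ f ∈ A, f ∈ B := by
    intro A B h f hf
    have h1 : f.1 ∈ insert l (A.map (valEmb l)) :=
      Finset.mem_insert_of_mem (Finset.mem_map_of_mem _ hf)
    rw [h] at h1
    rcases Finset.mem_insert.mp h1 with heq | hmem
    · exact absurd heq f.2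
    · obtain ⟨g, hg, hgf⟩ := Finset.mem_map.mp hmem
      exact (Subtype.ext hgf : g = f) ▸ hg
  intro T T' h
  simp only at h
  exact Finset.ext fun f => ⟨key T T' h f, key T' T h.symm f⟩

end SubAux


namespace SubAux
open Multigraph Relation Finset
attribute [local instance] Classical.propDecidable
variable {V E : Type} (G : Multigraph V E) (l : E) (a b : V) (k : ℕ) [Fintype E]

noncomputable def setA : Set (Finset {f : E // f ≠ l}) :=
  {T | G.IsSpanningTree (insert l (T.map (valEmb l)))}
noncomputable def setB : Set (Finset {f : E // f ≠ l}) :=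
  {T | (G.deleteEdge l).IsSpanningTree T}

lemma count_subdivide (hab : a ≠ b) (hl : G.ends l = s(a, b)) :
    (G.subdivide l a b k).complexity = (setA G l).ncard + (k+1) * (setB G l).ncard := by
  have main1 : {S' | (G.subdivide l a b k).IsSpanningTree S'} =
      (phi1 l k) '' (setA G l) ∪
        (fun p : Fin (k+1) × Finset {f : E // f ≠ l} => phi2 l k p.1 p.2) ''
          ((Set.univ : Set (Fin (k+1))) ×ˢ (setB G l)) := by
    ext S'
    rw [Set.mem_setOf_eq, tree_iff G l a b k hab hl S']
    simp only [Set.mem_union, Set.mem_image, Set.mem_prod, Set.mem_univ, true_and,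
      Prod.exists, setA, setB, Set.mem_setOf_eq]
    constructor
    · rintro (⟨T, hT, rfl⟩ | ⟨i, T, hT, rfl⟩)
      · exact Or.inl ⟨T, hT, rfl⟩
      · exact Or.inr ⟨i, T, hT, rfl⟩
    · rintro (⟨T, hT, rfl⟩ | ⟨i, T, hT, rfl⟩)
      · exact Or.inl ⟨T, hT, rfl⟩
      · exact Or.inr ⟨i, T, hT, rfl⟩
  have hdisj : Disjoint ((phi1 l k) '' (setA G l))
      ((fun p : Fin (k+1) × Finset {f : E // f ≠ l} => phi2 l k p.1 p.2) ''
        ((Set.univ : Set (Fin (k+1))) ×ˢ (setB G l))) := by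
    rw [Set.disjoint_left]
    rintro S' ⟨T, _, rfl⟩ ⟨⟨i, T'⟩, _, heq⟩
    simp only at heq
    have h1 : Sum.inr i ∈ phi1 l k T := mem_phi1_inr l k i
    rw [← heq] at h1
    exact ((mem_phi2_inr l k i).mp h1) rfl
  rw [Multigraph.complexity, main1, Set.ncard_union_eq hdisj (Set.toFinite _) (Set.toFinite _),
    Set.ncard_image_of_injective _ (phi1_inj l k), Set.ncard_image_of_injective _ (phi2_inj l k)]
  congr 1
  rw [← Nat.card_coe_set_eq, Nat.card_congr (Equiv.Set.prod _ _), Nat.card_prod,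
    Nat.card_coe_set_eq, Nat.card_coe_set_eq, Set.ncard_univ, Nat.card_eq_fintype_card,
    Fintype.card_fin]

noncomputable def TofE (T : Finset E) : Finset {f : E // f ≠ l} :=
  Finset.univ.filter (fun f => f.1 ∈ T)

lemma ins_TofE (T : Finset E) (hlT : l ∈ T) :
    insert l ((TofE l T).map (valEmb l)) = T := by
  ext e
  simp only [Finset.mem_insert, Finset.mem_map, TofE, Finset.mem_filter, Finset.mem_univ,
    true_and, valEmb, Function.Embedding.coeFn_mk]
  constructor
  · rintro (rfl | ⟨g, hg, rfl⟩)
    · exact hlT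
    · exact hg
  · intro he
    by_cases heq : e = l
    · exact Or.inl heq
    · exact Or.inr ⟨⟨e, heq⟩, he, rfl⟩

lemma map_TofE (T : Finset E) (hlT : l ∉ T) :
    (TofE l T).map (valEmb l) = T := by
  ext e
  simp only [Finset.mem_map, TofE, Finset.mem_filter, Finset.mem_univ, true_and, valEmb,
    Function.Embedding.coeFn_mk]
  constructor
  · rintro ⟨g, hg, rfl⟩
    exact hg
  · intro he
    exact ⟨⟨e, fun h => hlT (h ▸ he)⟩, he, rfl⟩

lemma count_G : G.complexity = (setA G l).ncard + (setB G l).ncard := by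
  have main2 : {T : Finset E | G.IsSpanningTree T} =
      (fun T : Finset {f : E // f ≠ l} => insert l (T.map (valEmb l))) '' (setA G l) ∪
        (fun T : Finset {f : E // f ≠ l} => T.map (valEmb l)) '' (setB G l) := by
    ext T
    simp only [Set.mem_setOf_eq, Set.mem_union, Set.mem_image, setA, setB]
    constructor
    · intro hT
      by_cases hlT : l ∈ T
      · exact Or.inl ⟨TofE l T, show G.IsSpanningTree _ by rw [ins_TofE l T hlT]; exact hT,
          ins_TofE l T hlT⟩
      · exact Or.inr ⟨TofE l T, show (G.deleteEdge l).IsSpanningTree _ by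
          rw [tree_del G l, map_TofE l T hlT]; exact hT, map_TofE l T hlT⟩
    · rintro (⟨T', hT', rfl⟩ | ⟨T', hT', rfl⟩)
      · exact hT'
      · exact (tree_del G l T').mp hT'
  have hdisj : Disjoint
      ((fun T : Finset {f : E // f ≠ l} => insert l (T.map (valEmb l))) '' (setA G l))
      ((fun T : Finset {f : E // f ≠ l} => T.map (valEmb l)) '' (setB G l)) := by
    rw [Set.disjoint_left]
    rintro T ⟨T1, _, rfl⟩ ⟨T2, _, heq⟩
    simp only at heq
    have h1 : l ∈ insert l (T1.map (valEmb l)) := Finset.mem_insert_self _ _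
    rw [← heq] at h1
    obtain ⟨g, _, hgl⟩ := Finset.mem_map.mp h1
    exact g.2 hgl
  rw [Multigraph.complexity, main2, Set.ncard_union_eq hdisj (Set.toFinite _) (Set.toFinite _),
    Set.ncard_image_of_injective _ (ins_inj l), Set.ncard_image_of_injective _
      (Finset.map_injective (valEmb l))]

lemma count_del : (G.deleteEdge l).complexity = (setB G l).ncard := rfl

end SubAux


open Multigraph SubAux in
/-- Iterated blow-up formula: subdividing the edge `l` (joining distinct vertices
`a`, `b`) into a path of `k + 1` edges gives `c(B_k(Γ, l)) = c(Γ) + k * c(Γ - l)`. -/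
theorem complexity_subdivide {V E : Type} [Fintype V] [Fintype E] [DecidableEq V]
    (G : Multigraph V E) (hG : G.Connected) (l : E) (a b : V) (hab : a ≠ b)
    (hl : G.ends l = s(a, b)) (k : ℕ) :
    (G.subdivide l a b k).complexity = G.complexity + k * (G.deleteEdge l).complexity := by
  rw [count_subdivide G l a b k hab hl, count_G G l, count_del G l]
  ring
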